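/- Let W be a group, r an involution in W, W⁺ ⊴ W of index 2 with r ∉ W⁺, M ⊴ W⁺, K ⊴ W with K ≤ W⁺, and N = M ∩ K. Then N = rNr⁻¹ (equivalently, N is normal in W) if and only if M ∩ K ≤ rMr⁻¹. -/
import Mathlib


/-- The conjugate subgroup `r M r⁻¹`. -/
def conjSub {W : Type} [Group W] (r : W) (M : Subgroup W) : Subgroup W :=
  M.map (MulAut.conj r).toMonoidHom

lemma mem_conjSub {W : Type} [Group W] {r x : W} {M : Subgroup W} :
    x ∈ conjSub r M ↔ ∃ y ∈ M, r * y * r⁻¹ = x := by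
  simp [conjSub, Subgroup.mem_map, MulAut.conj]

lemma conjSub_inf {W : Type} [Group W] (r : W) (M K : Subgroup W) :
    conjSub r (M ⊓ K) = conjSub r M ⊓ conjSub r K := by
  ext x
  simp only [mem_conjSub, Subgroup.mem_inf]
  constructor
  · rintro ⟨y, ⟨hM, hK⟩, rfl⟩
    exact ⟨⟨y, hM, rfl⟩, ⟨y, hK, rfl⟩⟩
  · rintro ⟨⟨y, hy, hyx⟩, ⟨z, hz, hzx⟩⟩
    have : y = z := by
      have := hyx.trans hzx.symm
      exact mul_left_cancel (mul_right_cancel this)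
    subst this
    exact ⟨y, ⟨hy, hz⟩, hyx⟩

lemma conjSub_normal {W : Type} [Group W] (r : W) (K : Subgroup W) [hK : K.Normal] :
    conjSub r K = K := by
  ext x
  rw [mem_conjSub]
  constructor
  · rintro ⟨y, hy, rfl⟩
    exact hK.conj_mem y hy r
  · intro hx
    exact ⟨r⁻¹ * x * r, by simpa using hK.conj_mem x hx r⁻¹, by group⟩

lemma conjSub_conjSub {W : Type} [Group W] {r : W} (hr : r ^ 2 = 1) (M : Subgroup W) :
    conjSub r (conjSub r M) = M := by
  have hrr : r * r = 1 := by rw [← sq]; exact hr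
  ext x
  simp only [mem_conjSub]
  constructor
  · rintro ⟨y, ⟨z, hz, rfl⟩, rfl⟩
    have hinv : r⁻¹ = r := by rw [inv_eq_iff_mul_eq_one]; exact hrr
    have : r * (r * z * r⁻¹) * r⁻¹ = z := by
      rw [hinv, show r * (r * z * r) * r = (r * r) * z * (r * r) by group, hrr]
      simp
    rw [this]; exact hz
  · intro hx
    refine ⟨r * x * r⁻¹, ⟨x, hx, rfl⟩, ?_⟩
    have hinv : r⁻¹ = r := by rw [inv_eq_iff_mul_eq_one]; exact hrr
    rw [hinv, show r * (r * x * r) * r = (r * r) * x * (r * r) by group, hrr]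
    simp

lemma conjSub_mono {W : Type} [Group W] (r : W) {M K : Subgroup W} (h : M ≤ K) :
    conjSub r M ≤ conjSub r K := by
  intro x hx
  rw [mem_conjSub] at hx ⊢
  obtain ⟨y, hy, rfl⟩ := hx
  exact ⟨y, h hy, rfl⟩

/-- With `N = M ∩ K`, `N = rNr⁻¹` if and only if `M ∩ K ≤ rMr⁻¹`. -/
theorem stmt_8 (W : Type) [Group W] (r : W) (hr : r ^ 2 = 1)
    (Wp : Subgroup W) [Wp.Normal] (hWp : Wp.index = 2) (hrW : r ∉ Wp)
    (M K : Subgroup W) (hMle : M ≤ Wp) [(M.subgroupOf Wp).Normal]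
    [K.Normal] (hKle : K ≤ Wp) :
    conjSub r (M ⊓ K) = M ⊓ K ↔ M ⊓ K ≤ conjSub r M := by
  have hkey : conjSub r (M ⊓ K) = conjSub r M ⊓ K := by
    rw [conjSub_inf, conjSub_normal r K]
  constructor
  · intro h
    rw [← h, hkey]
    exact inf_le_left
  · intro h
    rw [hkey]
    apply le_antisymm
    · -- conjugate hypothesis by r
      have h2 : conjSub r (M ⊓ K) ≤ conjSub r (conjSub r M) := conjSub_mono r h
      rw [conjSub_conjSub hr, hkey] at h2
      exact le_inf h2 inf_le_right
    · exact le_inf h inf_le_right
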